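/- Let p be a prime, K = {k₁,...,k_r} and L = {l₁,...,l_s} disjoint subsets of {0,...,p-1}, and 𝒜 a family of subsets of [n] with |A| mod p ∈ K for A ∈ 𝒜 and |A∩B| mod p ∈ L for distinct A, B ∈ 𝒜. Suppose p + k₁ - 1 ≤ (s - 2r + 1) + k_r and n ≤ 2s - 2r, where k₁ = min K and k_r = max K, and n ≥ s + k_r. Then |𝒜| ≤ r · C(n, s). -/
import Mathlib

private lemma choose_mono_half (n : ℕ) : ∀ i, ∀ j ≤ i, 2 * i ≤ n →
    n.choose j ≤ n.choose i := by
  intro i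
  induction i with
  | zero => intro j hj _; obtain rfl := Nat.le_zero.mp hj; exact le_rfl
  | succ i ih =>
    intro j hj h2
    rcases Nat.eq_or_lt_of_le hj with rfl | hlt
    · exact le_rfl
    · have h1 : n.choose j ≤ n.choose i := ih j (by omega) (by omega)
      have h2' : n.choose i ≤ n.choose (i + 1) :=
        Nat.choose_le_succ_of_lt_half_left (by omega)
      exact h1.trans h2'

private lemma choose_strict_half (n m : ℕ) (hm : 1 ≤ m) (h2 : 2 * m ≤ n) :
    n.choose (m - 1) + 1 ≤ n.choose m := by
  obtain ⟨m', rfl⟩ : ∃ m', m = m' + 1 := ⟨m - 1, by omega⟩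
  have hid := Nat.choose_succ_right_eq n m'
  have hpos : 0 < n.choose m' := Nat.choose_pos (by omega)
  -- choose n (m'+1) * (m'+1) = choose n m' * (n - m')
  have e1 : n.choose m' * (m' + 2) = n.choose m' * (m' + 1) + n.choose m' := by ring
  have e2 : n.choose m' * (m' + 2) ≤ n.choose m' * (n - m') :=
    Nat.mul_le_mul_left _ (by omega)
  have hlt : n.choose m' * (m' + 1) < n.choose (m' + 1) * (m' + 1) := by omega
  have := Nat.lt_of_mul_lt_mul_right hlt
  simpa using this

private lemma key_choose : ∀ n a b m : ℕ, a + b < m → 2 * m ≤ n →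
    n.choose a + n.choose b ≤ n.choose m := by
  intro n
  induction n using Nat.strong_induction_on with
  | _ n ih =>
    intro a b m hab h2
    match a, b with
    | 0, b =>
      have hb : n.choose b ≤ n.choose (m - 1) :=
        choose_mono_half n (m - 1) b (by omega) (by omega)
      have := choose_strict_half n m (by omega) h2
      simpa using by omega
    | a + 1, 0 =>
      have ha : n.choose (a + 1) ≤ n.choose (m - 1) :=
        choose_mono_half n (m - 1) (a + 1) (by omega) (by omega)
      have := choose_strict_half n m (by omega) h2
      simpa using by omega
    | a + 1, b + 1 =>
      obtain ⟨n', rfl⟩ : ∃ n', n = n' + 1 := ⟨n - 1, by omega⟩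
      obtain ⟨m', rfl⟩ : ∃ m', m = m' + 1 := ⟨m - 1, by omega⟩
      rw [Nat.choose_succ_succ' n' a, Nat.choose_succ_succ' n' b,
        Nat.choose_succ_succ' n' m']
      rcases le_or_gt (2 * (m' + 1)) n' with hle | hgt
      · have h1 : n'.choose a + n'.choose b ≤ n'.choose m' :=
          ih n' (by omega) a b m' (by omega) (by omega)
        have h2' : n'.choose (a + 1) + n'.choose (b + 1) ≤ n'.choose (m' + 1) :=
          ih n' (by omega) (a + 1) (b + 1) (m' + 1) (by omega) hle
        omega
      · -- boundary: n' + 1 = 2 * (m' + 1)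
        have hn : n' + 1 = 2 * (m' + 1) := by omega
        have hsym : n'.choose (m' + 1) = n'.choose m' := by
          have hmle : m' + 1 ≤ n' := by omega
          have := Nat.choose_symm hmle
          rw [← this]
          congr 1
          omega
        have h1 : n'.choose a + n'.choose (b + 1) ≤ n'.choose m' :=
          ih n' (by omega) a (b + 1) m' (by omega) (by omega)
        have h2' : n'.choose (a + 1) + n'.choose b ≤ n'.choose m' :=
          ih n' (by omega) (a + 1) b m' (by omega) (by omega)
        omega

/-- Case 4 of the main proof: if `p + k₁ - 1 ≤ (s - 2r + 1) + k_r`, `n ≤ 2s - 2r` and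
`n ≥ s + k_r`, then a mod-`p` `L`-intersecting family with sizes mod `p` in `K`
satisfies `|𝒜| ≤ r·C(n,s)`. -/
theorem stmt14 (p n r s : ℕ) (hp : p.Prime) (K L : Finset ℕ) (hKne : K.Nonempty)
    (hK : K ⊆ Finset.range p) (hL : L ⊆ Finset.range p) (hdisj : Disjoint K L)
    (hKr : K.card = r) (hLs : L.card = s)
    (𝒜 : Finset (Finset ℕ)) (hsub : ∀ A ∈ 𝒜, A ⊆ Finset.Icc 1 n)
    (hsize : ∀ A ∈ 𝒜, A.card % p ∈ K)
    (hint : ∀ A ∈ 𝒜, ∀ B ∈ 𝒜, A ≠ B → (A ∩ B).card % p ∈ L)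
    (h1 : (p : ℤ) + K.min' hKne - 1 ≤ (s : ℤ) - 2 * r + 1 + K.max' hKne)
    (h2 : (n : ℤ) ≤ 2 * s - 2 * r)
    (h3 : n ≥ s + K.max' hKne) :
    𝒜.card ≤ r * n.choose s := by
  classical
  set kr := K.max' hKne with hkr_def
  have hr1 : 1 ≤ r := by
    rw [← hKr]; exact Finset.card_pos.mpr hKne
  have hrs : r + s ≤ p := by
    have hsubKL : K ∪ L ⊆ Finset.range p := Finset.union_subset hK hL
    have := Finset.card_le_card hsubKL
    rwa [Finset.card_union_of_disjoint hdisj, hKr, hLs, Finset.card_range] at this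
  have hn2s : n + 2 * r ≤ 2 * s := by exact_mod_cast by linarith [h2]
  have hskr : s + kr ≤ n := h3
  have hsp : s < p := by omega
  have hn2p : n < 2 * p := by omega
  -- key binomial inequality for each k ∈ K
  have hkey : ∀ k ∈ K, n.choose k + n.choose (p + k) ≤ n.choose s := by
    intro k hk
    have hkkr : k ≤ kr := K.le_max' k hk
    have hsym : n.choose (n - s) = n.choose s := Nat.choose_symm (by omega)
    rcases le_or_gt (p + k) n with hle | hlt
    · have hsym2 : n.choose (p + k) = n.choose (n - (p + k)) :=
        (Nat.choose_symm hle).symm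
      rw [hsym2, ← hsym]
      exact key_choose n k (n - (p + k)) (n - s) (by omega) (by omega)
    · rw [Nat.choose_eq_zero_of_lt hlt, ← hsym]
      have := choose_mono_half n (n - s) k (by omega) (by omega)
      omega
  -- counting
  have hfib : 𝒜.card = ∑ k ∈ K, (𝒜.filter fun A => A.card % p = k).card :=
    Finset.card_eq_sum_card_fiberwise hsize
  have hbound : ∀ k ∈ K, (𝒜.filter fun A => A.card % p = k).card ≤ n.choose s := by
    intro k hk
    have hsubset : (𝒜.filter fun A => A.card % p = k) ⊆
        (Finset.Icc 1 n).powersetCard k ∪ (Finset.Icc 1 n).powersetCard (p + k) := by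
      intro A hA
      rw [Finset.mem_filter] at hA
      obtain ⟨hA𝒜, hmod⟩ := hA
      have hsubA : A ⊆ Finset.Icc 1 n := hsub A hA𝒜
      have hcard : A.card ≤ n := by
        have := Finset.card_le_card hsubA
        rwa [Nat.card_Icc, Nat.add_sub_cancel] at this
      have hdm := Nat.mod_add_div A.card p
      have hdivlt : A.card / p < 2 := Nat.div_lt_of_lt_mul (by omega)
      have hcases : A.card = k ∨ A.card = p + k := by
        have h01 : A.card / p = 0 ∨ A.card / p = 1 := by
          rcases Nat.lt_or_ge (A.card / p) 1 with h | h
          · exact Or.inl (Nat.lt_one_iff.mp h)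
          · exact Or.inr (le_antisymm (Nat.le_of_lt_succ hdivlt) h)
        rcases h01 with h0 | h0 <;> rw [hmod, h0] at hdm <;> omega
      rcases hcases with h | h
      · exact Finset.mem_union_left _ (Finset.mem_powersetCard.mpr ⟨hsubA, h⟩)
      · exact Finset.mem_union_right _ (Finset.mem_powersetCard.mpr ⟨hsubA, h⟩)
    calc (𝒜.filter fun A => A.card % p = k).card
        ≤ ((Finset.Icc 1 n).powersetCard k ∪
            (Finset.Icc 1 n).powersetCard (p + k)).card :=
          Finset.card_le_card hsubset
      _ ≤ ((Finset.Icc 1 n).powersetCard k).card +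
            ((Finset.Icc 1 n).powersetCard (p + k)).card := Finset.card_union_le _ _
      _ = n.choose k + n.choose (p + k) := by
          rw [Finset.card_powersetCard, Finset.card_powersetCard, Nat.card_Icc,
            Nat.add_sub_cancel]
      _ ≤ n.choose s := hkey k hk
  calc 𝒜.card = ∑ k ∈ K, (𝒜.filter fun A => A.card % p = k).card := hfib
    _ ≤ K.card • n.choose s := Finset.sum_le_card_nsmul _ _ _ hbound
    _ = r * n.choose s := by rw [hKr, smul_eq_mul]
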